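/- Work in L²((−1,1), ℂ) with inner product ⟨g, h⟩ = ∫_{−1}^{1} conj(g)·h. Let e_k^p(x) := (1/√2)·exp(iπkx) for k ∈ ℤ (the periodic Hilbert basis), and let e_0^N(x) := 1/√2 and e_k^N(x) := cos((kπ/2)(x + 1)) for integers k ≥ 1 (the Neumann cosine Hilbert basis). Let C ∈ L²((−1,1)) be real-valued and even, and let u ∈ L²((−1,1), ℂ) be even (u(−x) = u(x) a.e.). Then, with equality in L²: ∑'_{k∈ℤ} ⟨e_k^p, C⟩·⟨e_k^p, u⟩ • e_k^p = ∑'_{k∈ℕ} ⟨e_k^p, C⟩·⟨e_{2k}^N, u⟩ • e_{2k}^N. -/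

import Mathlib

open MeasureTheory

open scoped ENNReal

lemma integral_neg_Ioo (φ : ℝ → ℂ) :
    ∫ x in Set.Ioo (-1:ℝ) 1, φ (-x) = ∫ x in Set.Ioo (-1:ℝ) 1, φ x := by
  rw [← integral_Ioc_eq_integral_Ioo, ← integral_Ioc_eq_integral_Ioo,
    ← intervalIntegral.integral_of_le (by norm_num : (-1:ℝ) ≤ 1),
    ← intervalIntegral.integral_of_le (by norm_num : (-1:ℝ) ≤ 1),
    intervalIntegral.integral_comp_neg]
  norm_num

lemma inner_even_aux
    (ep : HilbertBasis ℤ ℂ (Lp ℂ 2 (volume.restrict (Set.Ioo (-1 : ℝ) 1))))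
    (hep : ∀ k : ℤ, (ep k : ℝ → ℂ) =ᵐ[volume.restrict (Set.Ioo (-1 : ℝ) 1)]
      fun x : ℝ => (Real.sqrt 2 : ℂ)⁻¹ * Complex.exp (Complex.I * Real.pi * (k : ℂ) * (x : ℂ)))
    (v : Lp ℂ 2 (volume.restrict (Set.Ioo (-1 : ℝ) 1)))
    (hv : ∀ᵐ x ∂(volume.restrict (Set.Ioo (-1 : ℝ) 1)), v (-x) = v x) (k : ℤ) :
    (inner ℂ (ep (-k)) v : ℂ) = inner ℂ (ep k) v := by
  rw [MeasureTheory.L2.inner_def, MeasureTheory.L2.inner_def]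
  simp only [RCLike.inner_apply']
  have h1 : (fun x : ℝ => (starRingEnd ℂ) ((ep (-k) : ℝ → ℂ) x) * v x)
      =ᵐ[volume.restrict (Set.Ioo (-1 : ℝ) 1)]
      fun x : ℝ => (fun y : ℝ =>
        (starRingEnd ℂ) ((Real.sqrt 2 : ℂ)⁻¹
          * Complex.exp (Complex.I * Real.pi * (k : ℂ) * (y : ℂ))) * v y) (-x) := by
    filter_upwards [hep (-k), hv] with x h1 h2
    simp only [h1, h2]
    congr 2
    push_cast
    ring_nf
  have h2 : (fun x : ℝ => (starRingEnd ℂ) ((ep k : ℝ → ℂ) x) * v x)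
      =ᵐ[volume.restrict (Set.Ioo (-1 : ℝ) 1)]
      fun y : ℝ => (starRingEnd ℂ) ((Real.sqrt 2 : ℂ)⁻¹
          * Complex.exp (Complex.I * Real.pi * (k : ℂ) * (y : ℂ))) * v y := by
    filter_upwards [hep k] with x h1
    simp only [h1]
  rw [integral_congr_ae h1, integral_congr_ae h2]
  exact integral_neg_Ioo (fun y : ℝ => (starRingEnd ℂ) ((Real.sqrt 2 : ℂ)⁻¹
    * Complex.exp (Complex.I * Real.pi * (k : ℂ) * (y : ℂ))) * v y)

lemma eN_two_mul_eq
    (ep : HilbertBasis ℤ ℂ (Lp ℂ 2 (volume.restrict (Set.Ioo (-1 : ℝ) 1))))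
    (hep : ∀ k : ℤ, (ep k : ℝ → ℂ) =ᵐ[volume.restrict (Set.Ioo (-1 : ℝ) 1)]
      fun x : ℝ => (Real.sqrt 2 : ℂ)⁻¹ * Complex.exp (Complex.I * Real.pi * (k : ℂ) * (x : ℂ)))
    (eN : HilbertBasis ℕ ℂ (Lp ℂ 2 (volume.restrict (Set.Ioo (-1 : ℝ) 1))))
    (heN : ∀ k : ℕ, k ≠ 0 → (eN k : ℝ → ℂ) =ᵐ[volume.restrict (Set.Ioo (-1 : ℝ) 1)]
      fun x : ℝ => (Real.cos ((k : ℝ) * Real.pi / 2 * (x + 1)) : ℂ))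
    (k : ℕ) (hk : k ≠ 0) :
    (eN (2 * k) : Lp ℂ 2 (volume.restrict (Set.Ioo (-1 : ℝ) 1)))
      = ((-1 : ℂ) ^ k * (Real.sqrt 2 : ℂ)⁻¹) • (ep (k : ℤ) + ep (-(k : ℤ))) := by
  apply MeasureTheory.Lp.ext
  have hadd := MeasureTheory.Lp.coeFn_add (ep (k : ℤ)) (ep (-(k : ℤ)))
  have hsmul := MeasureTheory.Lp.coeFn_smul ((-1 : ℂ) ^ k * (Real.sqrt 2 : ℂ)⁻¹)
    ((ep (k : ℤ)) + (ep (-(k : ℤ))))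
  filter_upwards [heN (2 * k) (by simpa using hk), hadd, hsmul, hep (k : ℤ), hep (-(k : ℤ))]
    with x h1 h2 h3 h4 h5
  rw [h1, h3]
  simp only [Pi.smul_apply, h2, Pi.add_apply, h4, h5, smul_eq_mul]
  have h2inv : ((Real.sqrt 2 : ℂ))⁻¹ * ((Real.sqrt 2 : ℂ))⁻¹ = 2⁻¹ := by
    rw [← mul_inv, ← Complex.ofReal_mul, Real.mul_self_sqrt (by norm_num : (0:ℝ) ≤ 2)]
    norm_num
  have hL : ((2 * k : ℕ) : ℝ) * Real.pi / 2 * (x + 1) = (k : ℝ) * Real.pi * x + (k : ℝ) * Real.pi := by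
    push_cast; ring
  rw [hL, Real.cos_add, Real.sin_nat_mul_pi, mul_zero, sub_zero]
  have hck : Real.cos ((k : ℝ) * Real.pi) = (-1 : ℝ) ^ k := by
    simpa using Real.cos_nat_mul_pi_sub 0 k
  rw [hck]
  have he1 : Complex.I * (Real.pi : ℂ) * ((k : ℤ) : ℂ) * (x : ℂ)
      = (((k : ℝ) * Real.pi * x : ℝ) : ℂ) * Complex.I := by push_cast; ring
  have he2 : Complex.I * (Real.pi : ℂ) * ((-(k : ℤ) : ℤ) : ℂ) * (x : ℂ)
      = (-(((k : ℝ) * Real.pi * x : ℝ) : ℂ)) * Complex.I := by push_cast; ring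
  rw [he1, he2, Complex.exp_mul_I, Complex.exp_mul_I, Complex.cos_neg, Complex.sin_neg]
  push_cast
  linear_combination ((-1:ℂ)^k * (-2) * Complex.cos ((k:ℂ) * (Real.pi:ℂ) * (x:ℂ))) * h2inv

lemma summable_aux {ι : Type*} {H : Type*} [NormedAddCommGroup H] [InnerProductSpace ℂ H]
    (b : HilbertBasis ι ℂ H) (x y : H) :
    Summable (fun i => ((inner ℂ (b i) x : ℂ) * (inner ℂ (b i) y : ℂ)) • b i) := by
  have hx2 : Summable fun i => ‖(inner ℂ (b i) x : ℂ)‖ ^ (2:ℕ) := by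
    have h := (lp.memℓp (b.repr x)).summable (by norm_num : 0 < ENNReal.toReal 2)
    simpa [b.repr_apply_apply, ENNReal.toReal_ofNat, Real.rpow_two] using h
  have hy2 : Summable fun i => ‖(inner ℂ (b i) y : ℂ)‖ ^ (2:ℕ) := by
    have h := (lp.memℓp (b.repr y)).summable (by norm_num : 0 < ENNReal.toReal 2)
    simpa [b.repr_apply_apply, ENNReal.toReal_ofNat, Real.rpow_two] using h
  have h1 : Summable fun i => ‖(inner ℂ (b i) x : ℂ) * (inner ℂ (b i) y : ℂ)‖ := by
    refine Summable.of_nonneg_of_le (fun i => norm_nonneg _) (fun i => ?_) (hx2.add hy2)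
    rw [norm_mul]
    nlinarith [sq_nonneg (‖(inner ℂ (b i) x : ℂ)‖ - ‖(inner ℂ (b i) y : ℂ)‖),
      norm_nonneg (inner ℂ (b i) x : ℂ), norm_nonneg (inner ℂ (b i) y : ℂ)]
  have hmem : Memℓp (fun i => (inner ℂ (b i) x : ℂ) * (inner ℂ (b i) y : ℂ)) 2 := by
    refine Memℓp.of_exponent_ge (memℓp_gen ?_) (by norm_num : (1:ℝ≥0∞) ≤ 2)
    simpa using h1
  have := b.hasSum_repr_symm (⟨_, hmem⟩ : lp (fun _ : ι => ℂ) 2)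
  exact this.summable

/-- In `L²((−1,1), ℂ)`, let `ep` be the periodic Hilbert basis
(`ep k = (1/√2)e^{iπkx}`, `k ∈ ℤ`) and `eN` the Neumann cosine Hilbert basis
(`eN 0 = 1/√2`, `eN k = cos((kπ/2)(x+1))` for `k ≥ 1`). If `C` is real-valued and even
and `u` is even, then
`∑'_{k∈ℤ} ⟨ep k, C⟩⟨ep k, u⟩ • ep k = ∑'_{k∈ℕ} ⟨ep k, C⟩⟨eN (2k), u⟩ • eN (2k)`. -/
theorem stmt_15
    (ep : HilbertBasis ℤ ℂ (Lp ℂ 2 (volume.restrict (Set.Ioo (-1 : ℝ) 1))))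
    (hep : ∀ k : ℤ, (ep k : ℝ → ℂ) =ᵐ[volume.restrict (Set.Ioo (-1 : ℝ) 1)]
      fun x : ℝ => (Real.sqrt 2 : ℂ)⁻¹ * Complex.exp (Complex.I * Real.pi * (k : ℂ) * (x : ℂ)))
    (eN : HilbertBasis ℕ ℂ (Lp ℂ 2 (volume.restrict (Set.Ioo (-1 : ℝ) 1))))
    (heN0 : (eN 0 : ℝ → ℂ) =ᵐ[volume.restrict (Set.Ioo (-1 : ℝ) 1)]
      fun _ : ℝ => (Real.sqrt 2 : ℂ)⁻¹)
    (heN : ∀ k : ℕ, k ≠ 0 → (eN k : ℝ → ℂ) =ᵐ[volume.restrict (Set.Ioo (-1 : ℝ) 1)]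
      fun x : ℝ => (Real.cos ((k : ℝ) * Real.pi / 2 * (x + 1)) : ℂ))
    (C u : Lp ℂ 2 (volume.restrict (Set.Ioo (-1 : ℝ) 1)))
    (hCreal : ∀ᵐ x ∂(volume.restrict (Set.Ioo (-1 : ℝ) 1)), (C x).im = 0)
    (hCeven : ∀ᵐ x ∂(volume.restrict (Set.Ioo (-1 : ℝ) 1)), C (-x) = C x)
    (hueven : ∀ᵐ x ∂(volume.restrict (Set.Ioo (-1 : ℝ) 1)), u (-x) = u x) :
    (∑' k : ℤ, ((inner ℂ (ep k) C : ℂ) * (inner ℂ (ep k) u : ℂ)) • ep k)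
      = ∑' k : ℕ, ((inner ℂ (ep (k : ℤ)) C : ℂ) * (inner ℂ (eN (2 * k)) u : ℂ)) • eN (2 * k) := by
  classical
  set f : ℤ → Lp ℂ 2 (volume.restrict (Set.Ioo (-1 : ℝ) 1)) :=
    fun k => ((inner ℂ (ep k) C : ℂ) * (inner ℂ (ep k) u : ℂ)) • ep k with hf_def
  have hf : HasSum f (∑' k : ℤ, f k) := (summable_aux ep C u).hasSum
  have heN0' : (eN 0 : Lp ℂ 2 (volume.restrict (Set.Ioo (-1 : ℝ) 1))) = ep 0 := by
    apply MeasureTheory.Lp.ext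
    filter_upwards [heN0, hep 0] with x h1 h2
    rw [h1, h2]
    simp
  have hkey : (fun n : ℕ => ((inner ℂ (ep (n : ℤ)) C : ℂ) * (inner ℂ (eN (2 * n)) u : ℂ)) • eN (2 * n))
      = Function.update (fun n : ℕ => f (n : ℤ) + f (-(n : ℤ))) 0 (f 0) := by
    funext n
    rcases Nat.eq_zero_or_pos n with rfl | hn
    · rw [Function.update_self]
      norm_num [heN0', hf_def]
    · have hn' : n ≠ 0 := hn.ne'
      rw [Function.update_of_ne (by exact_mod_cast hn')]
      rw [eN_two_mul_eq ep hep eN heN n hn', inner_smul_left, inner_add_left]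
      simp only [hf_def]
      rw [inner_even_aux ep hep C hCeven (n : ℤ), inner_even_aux ep hep u hueven (n : ℤ)]
      have hcconj : (starRingEnd ℂ) ((-1 : ℂ) ^ n * (Real.sqrt 2 : ℂ)⁻¹)
          = (-1 : ℂ) ^ n * (Real.sqrt 2 : ℂ)⁻¹ := by
        simp [map_mul, map_pow, map_inv₀, Complex.conj_ofReal]
      have hm : ((-1:ℂ)^n) * ((-1:ℂ)^n) = 1 := by
        rw [← pow_add, Even.neg_one_pow ⟨n, rfl⟩]
      have hsq : ((Real.sqrt 2 : ℝ) : ℂ) * ((Real.sqrt 2 : ℝ) : ℂ) = 2 := by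
        rw [← Complex.ofReal_mul, Real.mul_self_sqrt (by norm_num : (0:ℝ) ≤ 2)]
        norm_num
      have hc2 : ((-1 : ℂ) ^ n * (Real.sqrt 2 : ℂ)⁻¹) * ((-1 : ℂ) ^ n * (Real.sqrt 2 : ℂ)⁻¹)
          = 2⁻¹ :=
        calc ((-1 : ℂ) ^ n * (Real.sqrt 2 : ℂ)⁻¹) * ((-1 : ℂ) ^ n * (Real.sqrt 2 : ℂ)⁻¹)
            = (((-1:ℂ)^n) * ((-1:ℂ)^n)) * (((Real.sqrt 2 : ℝ) : ℂ) * ((Real.sqrt 2 : ℝ) : ℂ))⁻¹ := by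
              rw [mul_inv]; ring
          _ = 2⁻¹ := by rw [hm, hsq, one_mul]
      rw [hcconj, smul_smul, smul_add]
      have hs : ((inner ℂ (ep (n : ℤ)) C : ℂ) * (((-1 : ℂ) ^ n * (Real.sqrt 2 : ℂ)⁻¹)
            * ((inner ℂ (ep (n : ℤ)) u : ℂ) + (inner ℂ (ep (n : ℤ)) u : ℂ))))
            * ((-1 : ℂ) ^ n * (Real.sqrt 2 : ℂ)⁻¹)
          = (inner ℂ (ep (n : ℤ)) C : ℂ) * (inner ℂ (ep (n : ℤ)) u : ℂ) := by
        linear_combination (2 * (inner ℂ (ep (n : ℤ)) C : ℂ) * (inner ℂ (ep (n : ℤ)) u : ℂ)) * hc2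
      rw [hs]
  have h3 := hf.nat_add_neg
  have h4 := h3.update 0 (f 0)
  rw [hkey, h4.tsum_eq]
  simp only [Nat.cast_zero, neg_zero]
  abel
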